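/- The integral over T^2 of |4 - zeta_2 - 3*zeta_1 - zeta_1*zeta_2 + zeta_1^2|^2 / |2 - zeta_1*zeta_2 - zeta_1^2*zeta_2|^2 dm(zeta_1,zeta_2) is finite; that is, the boundary function p_1/p_2, where p_1 = 4 - z_2 - 3*z_1 - z_1*z_2 + z_1^2 and p_2 = 2 - z_1*z_2 - z_1^2*z_2, belongs to L^2(T^2, m). -/

import Mathlib

open MeasureTheory Complex Set Filter Topology MvPolynomial

noncomputable section

/-- The torus `T^2` as a subset of `ℂ × ℂ`. -/
def torus2 : Set (ℂ × ℂ) := {z | ‖z.1‖ = 1 ∧ ‖z.2‖ = 1}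

/-- The open unit bidisc `D^2`. -/
def bidisc : Set (ℂ × ℂ) := {z | ‖z.1‖ < 1 ∧ ‖z.2‖ < 1}

/-- The product Cauchy kernel on the bidisc. -/
def cauchyKer2 (z w : ℂ × ℂ) : ℂ :=
  ((1 - z.1 * (starRingEnd ℂ) w.1) * (1 - z.2 * (starRingEnd ℂ) w.2))⁻¹

/-- The product Poisson kernel on the bidisc. -/
def poissonKer2 (z ζ : ℂ × ℂ) : ℝ :=
  ((1 - ‖z.1‖ ^ 2) / ‖ζ.1 - z.1‖ ^ 2) *
    ((1 - ‖z.2‖ ^ 2) / ‖ζ.2 - z.2‖ ^ 2)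

/-- `σ` is the Clark-Aleksandrov measure of `b : D^2 → D` at parameter `α`. -/
def IsClarkMeasure2 (b : ℂ × ℂ → ℂ) (α : ℂ) (σ : Measure (ℂ × ℂ)) : Prop :=
  IsFiniteMeasure σ ∧ σ torus2ᶜ = 0 ∧
    ∀ z ∈ bidisc, ∫ ζ, poissonKer2 z ζ ∂σ =
      (1 - ‖b z‖ ^ 2) / ‖α - b z‖ ^ 2

/-- Normalized Haar (Lebesgue) measure on the unit circle `T`, as a measure on `ℂ`. -/
def haarCircle : Measure ℂ :=
  (ENNReal.ofReal (2 * Real.pi))⁻¹ •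
    ((volume : Measure ℝ).restrict (Set.Ioc (0 : ℝ) (2 * Real.pi))).map
      (fun t : ℝ => Complex.exp (t * Complex.I))

/-- Normalized Haar (Lebesgue) measure on `T^2`, as a measure on `ℂ × ℂ`. -/
def haarTorus2 : Measure (ℂ × ℂ) :=
  (ENNReal.ofReal (2 * Real.pi))⁻¹ ^ 2 •
    ((volume : Measure (ℝ × ℝ)).restrict
        (Set.Ioc (0 : ℝ) (2 * Real.pi) ×ˢ Set.Ioc (0 : ℝ) (2 * Real.pi))).map
      (fun t : ℝ × ℝ => (Complex.exp (t.1 * Complex.I), Complex.exp (t.2 * Complex.I)))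


/-- The complex absolute value, as a bundled absolute value (it is the norm). -/
def Complex.abs : AbsoluteValue ℂ ℝ := IsAbsoluteValue.toAbsoluteValue (norm : ℂ → ℝ)

lemma Complex.abs_apply (z : ℂ) : Complex.abs z = ‖z‖ := rfl

open Real in
private lemma lintegral_cauchy (a c : ℝ) (ha : 0 < a) (hc : 0 < c) :
    ∫⁻ u : ℝ, ENNReal.ofReal (200 * a / (a ^ 2 + c * u ^ 2)) ≤
      ENNReal.ofReal (200 * π / Real.sqrt c) := by
  set k := Real.sqrt c with hk
  have hk0 : 0 < k := Real.sqrt_pos.2 hc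
  have hkc : k ^ 2 = c := Real.sq_sqrt hc.le
  have hfun : ∀ u : ℝ, 200 * a / (a ^ 2 + c * u ^ 2)
      = (200 / a) * (1 + ((k / a) * u) ^ 2)⁻¹ := by
    intro u; rw [← hkc]; field_simp
  have hint : Integrable fun u : ℝ => (200 / a) * (1 + ((k / a) * u) ^ 2)⁻¹ :=
    (integrable_inv_one_add_sq.comp_mul_left' (by positivity : k / a ≠ 0)).const_mul _
  have hval : (∫ u : ℝ, (200 / a) * (1 + ((k / a) * u) ^ 2)⁻¹) = 200 * π / k := by
    rw [MeasureTheory.integral_const_mul,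
      MeasureTheory.Measure.integral_comp_mul_left (fun y => (1 + y ^ 2)⁻¹) (k / a),
      integral_univ_inv_one_add_sq]
    rw [abs_of_pos (by positivity)]
    field_simp
    rw [smul_eq_mul, ← mul_assoc, mul_div_assoc', mul_comm k a, mul_div_assoc, div_self hk0.ne', mul_one]
  calc ∫⁻ u : ℝ, ENNReal.ofReal (200 * a / (a ^ 2 + c * u ^ 2))
      = ∫⁻ u : ℝ, ENNReal.ofReal ((200 / a) * (1 + ((k / a) * u) ^ 2)⁻¹) := by
        simp_rw [hfun]
    _ = ENNReal.ofReal (∫ u : ℝ, (200 / a) * (1 + ((k / a) * u) ^ 2)⁻¹) := by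
        rw [MeasureTheory.ofReal_integral_eq_lintegral_ofReal hint]
        · exact Filter.Eventually.of_forall fun u => by positivity
    _ ≤ ENNReal.ofReal (200 * π / k) := by rw [hval]

open Real in
private lemma normSq_aux (r θ : ℝ) :
    Complex.abs (2 - (r:ℂ) * Complex.exp (θ * Complex.I)) ^ 2
      = (2 - r)^2 + 4*r*(1 - Real.cos θ) := by
  rw [Complex.abs_apply, Complex.sq_norm, Complex.normSq_apply]
  simp only [Complex.sub_re, Complex.sub_im, Complex.mul_re, Complex.mul_im,
    Complex.ofReal_re, Complex.ofReal_im, Complex.exp_ofReal_mul_I_re,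
    Complex.exp_ofReal_mul_I_im, Complex.re_ofNat, Complex.im_ofNat]
  linear_combination (r^2) * (Real.sin_sq_add_cos_sq θ)


open Real in
private lemma pointwise_bound {z₁ z₂ : ℂ} (h1 : Complex.abs z₁ = 1) :
    Complex.abs (4 - z₂ - 3 * z₁ - z₁ * z₂ + z₁ ^ 2) ^ 2
      ≤ 2 * Complex.abs (2 - z₁ * z₂ - z₁ ^ 2 * z₂) ^ 2
        + 50 * Complex.abs (1 - z₁) ^ 2 := by
  have h5 : Complex.abs (z₁ ^ 2 - 2 * z₁ + 2) ≤ 5 := by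
    calc Complex.abs (z₁ ^ 2 - 2 * z₁ + 2)
        ≤ Complex.abs (z₁ ^ 2 - 2 * z₁) + Complex.abs 2 := Complex.abs.add_le _ _
      _ ≤ Complex.abs (z₁ ^ 2) + Complex.abs (2 * z₁) + Complex.abs 2 := by
          exact add_le_add_left (Complex.abs.sub_le_add _ _) _
      _ = 5 := by simp [map_mul, map_pow, h1]; norm_num [Complex.abs_apply]
  have key : Complex.abs (4 - z₂ - 3 * z₁ - z₁ * z₂ + z₁ ^ 2)
      ≤ Complex.abs (2 - z₁ * z₂ - z₁ ^ 2 * z₂) + 5 * Complex.abs (1 - z₁) := by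
    have hid : z₁ * (4 - z₂ - 3 * z₁ - z₁ * z₂ + z₁ ^ 2)
        = (2 - z₁ * z₂ - z₁ ^ 2 * z₂) + (z₁ - 1) * (z₁ ^ 2 - 2 * z₁ + 2) := by ring
    calc Complex.abs (4 - z₂ - 3 * z₁ - z₁ * z₂ + z₁ ^ 2)
        = Complex.abs (z₁ * (4 - z₂ - 3 * z₁ - z₁ * z₂ + z₁ ^ 2)) := by
          rw [map_mul, h1, one_mul]
      _ = Complex.abs ((2 - z₁ * z₂ - z₁ ^ 2 * z₂) + (z₁ - 1) * (z₁ ^ 2 - 2 * z₁ + 2)) := by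
          rw [hid]
      _ ≤ Complex.abs (2 - z₁ * z₂ - z₁ ^ 2 * z₂)
            + Complex.abs (z₁ - 1) * Complex.abs (z₁ ^ 2 - 2 * z₁ + 2) := by
          rw [← map_mul]
          exact Complex.abs.add_le _ _
      _ ≤ Complex.abs (2 - z₁ * z₂ - z₁ ^ 2 * z₂) + 5 * Complex.abs (1 - z₁) := by
          rw [Complex.abs.map_sub z₁ 1]
          have := Complex.abs.nonneg (z₁ - 1)
          nlinarith [Complex.abs.nonneg (1 - z₁), h5]
  nlinarith [Complex.abs.nonneg (4 - z₂ - 3 * z₁ - z₁ * z₂ + z₁ ^ 2),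
    Complex.abs.nonneg (2 - z₁ * z₂ - z₁ ^ 2 * z₂), Complex.abs.nonneg (1 - z₁),
    sq_nonneg (Complex.abs (2 - z₁ * z₂ - z₁ ^ 2 * z₂) - 5 * Complex.abs (1 - z₁))]

lemma div_bound {z₁ z₂ : ℂ} (h1 : Complex.abs z₁ = 1) :
    Complex.abs (4 - z₂ - 3 * z₁ - z₁ * z₂ + z₁ ^ 2) ^ 2
        / Complex.abs (2 - z₁ * z₂ - z₁ ^ 2 * z₂) ^ 2
      ≤ 2 + 50 * (Complex.abs (1 - z₁) ^ 2
        / Complex.abs (2 - z₁ * z₂ - z₁ ^ 2 * z₂) ^ 2) := by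
  set D := Complex.abs (2 - z₁ * z₂ - z₁ ^ 2 * z₂) with hD
  rcases eq_or_lt_of_le (Complex.abs.nonneg (2 - z₁ * z₂ - z₁ ^ 2 * z₂)) with h | h
  · rw [hD] at *; rw [← h]; norm_num
  · rw [div_le_iff₀ (by positivity : (0:ℝ) < D ^ 2)] at *
    have hpb := pointwise_bound (z₂ := z₂) h1
    have : 50 * (Complex.abs (1 - z₁) ^ 2 / D ^ 2) * D ^ 2
        = 50 * Complex.abs (1 - z₁) ^ 2 := by have hD0 : D ≠ 0 := ne_of_gt h; field_simp
    nlinarith [hpb]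

open Real in
private lemma circle_facts {z₁ : ℂ} (h1 : Complex.abs z₁ = 1) (hne : z₁ ≠ 1) :
    Complex.abs (1 - z₁) ^ 2 = 4 - Complex.abs (z₁ + z₁ ^ 2) ^ 2
      ∧ Complex.abs (z₁ + z₁ ^ 2) < 2 := by
  have hz : z₁.re * z₁.re + z₁.im * z₁.im = 1 := by
    have : Complex.abs z₁ ^ 2 = Complex.normSq z₁ := Complex.sq_norm z₁
    rw [h1] at this
    rw [Complex.normSq_apply] at this
    linarith [this]
  have hre : z₁.re < 1 := by
    rcases lt_or_ge z₁.re 1 with h | h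
    · exact h
    · exfalso
      have him : z₁.im = 0 := by nlinarith
      have : z₁.re = 1 := by nlinarith
      exact hne (Complex.ext (by simp [this]) (by simp [him]))
  have hL : Complex.abs (1 - z₁) ^ 2 = 2 - 2 * z₁.re := by
    rw [Complex.abs_apply, Complex.sq_norm, Complex.normSq_apply]
    simp only [Complex.sub_re, Complex.sub_im, Complex.one_re, Complex.one_im]
    nlinarith [hz]
  have hw : z₁ + z₁ ^ 2 = z₁ * (1 + z₁) := by ring
  have hr : Complex.abs (z₁ + z₁ ^ 2) = Complex.abs (1 + z₁) := by
    rw [hw, map_mul, h1, one_mul]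
  have hrsq : Complex.abs (z₁ + z₁ ^ 2) ^ 2 = 2 + 2 * z₁.re := by
    rw [hr, Complex.abs_apply, Complex.sq_norm, Complex.normSq_apply]
    simp only [Complex.add_re, Complex.add_im, Complex.one_re, Complex.one_im]
    nlinarith [hz]
  constructor
  · rw [hL, hrsq]; ring
  · nlinarith [Complex.abs.nonneg (z₁ + z₁ ^ 2), hrsq]

open Real in
set_option maxHeartbeats 1000000 in
private lemma inner_bound {z₁ : ℂ} (h1 : Complex.abs z₁ = 1) (hne : z₁ ≠ 1) :
    (∫⁻ t in Set.Ioc (0:ℝ) (2*π), ENNReal.ofReal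
      (Complex.abs (4 - Complex.exp (t*Complex.I) - 3*z₁ - z₁*Complex.exp (t*Complex.I)
          + z₁^2) ^ 2 /
        Complex.abs (2 - z₁*Complex.exp (t*Complex.I)
          - z₁^2*Complex.exp (t*Complex.I)) ^ 2))
      ≤ ENNReal.ofReal (404*π) + ENNReal.ofReal (1000*π^2) := by
  set w := z₁ + z₁ ^ 2 with hwdef
  set r := Complex.abs w with hrdef
  set φ := Complex.arg w with hφdef
  set L := Complex.abs (1 - z₁) ^ 2 with hLdef
  obtain ⟨hL4, hr2⟩ := circle_facts h1 hne
  have hr0 : 0 ≤ r := Complex.abs.nonneg w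
  have hL0 : 0 ≤ L := sq_nonneg _
  -- identity for the denominator
  have habs : ∀ t : ℝ,
      Complex.abs (2 - z₁*Complex.exp (t*Complex.I) - z₁^2*Complex.exp (t*Complex.I)) ^ 2
        = (2 - r)^2 + 4*r*(1 - Real.cos (t + φ)) := by
    intro t
    have h2 : 2 - z₁ * Complex.exp (t*Complex.I) - z₁^2 * Complex.exp (t*Complex.I)
        = 2 - w * Complex.exp (t*Complex.I) := by rw [hwdef]; ring
    have hwe : w * Complex.exp (t*Complex.I)
        = ((r : ℝ) : ℂ) * Complex.exp (((t + φ : ℝ)) * Complex.I) := by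
      conv_lhs => rw [← Complex.norm_mul_exp_arg_mul_I w]
      rw [mul_assoc, ← Complex.exp_add]
      congr 2
      push_cast
      ring
    rw [h2, hwe, normSq_aux]
  -- the generic pointwise bound
  have hdb : ∀ t : ℝ,
      (Complex.abs (4 - Complex.exp (t*Complex.I) - 3*z₁ - z₁*Complex.exp (t*Complex.I)
          + z₁^2) ^ 2 /
        Complex.abs (2 - z₁*Complex.exp (t*Complex.I)
          - z₁^2*Complex.exp (t*Complex.I)) ^ 2)
      ≤ 2 + 50 * (L / ((2 - r)^2 + 4*r*(1 - Real.cos (t + φ)))) := by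
    intro t
    rw [← habs t]
    exact div_bound (z₂ := Complex.exp (t*Complex.I)) h1
  rcases le_or_gt r 1 with hr1 | hr1
  -- Case r ≤ 1 : denominator ≥ 1, integrand ≤ 202
  · have hb : ∀ t : ℝ,
        ENNReal.ofReal
          (Complex.abs (4 - Complex.exp (t*Complex.I) - 3*z₁ - z₁*Complex.exp (t*Complex.I)
              + z₁^2) ^ 2 /
            Complex.abs (2 - z₁*Complex.exp (t*Complex.I)
              - z₁^2*Complex.exp (t*Complex.I)) ^ 2)
          ≤ ENNReal.ofReal 202 := by
      intro t
      apply ENNReal.ofReal_le_ofReal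
      have hD1 : (1:ℝ) ≤ (2 - r)^2 + 4*r*(1 - Real.cos (t + φ)) := by
        nlinarith [Real.cos_le_one (t + φ)]
      have hLle : L ≤ 4 := by nlinarith
      have : L / ((2 - r)^2 + 4*r*(1 - Real.cos (t + φ))) ≤ L :=
        div_le_self hL0 hD1
      linarith [hdb t]
    calc (∫⁻ t in Set.Ioc (0:ℝ) (2*π), ENNReal.ofReal
          (Complex.abs (4 - Complex.exp (t*Complex.I) - 3*z₁ - z₁*Complex.exp (t*Complex.I)
              + z₁^2) ^ 2 /
            Complex.abs (2 - z₁*Complex.exp (t*Complex.I)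
              - z₁^2*Complex.exp (t*Complex.I)) ^ 2))
        ≤ ∫⁻ _t in Set.Ioc (0:ℝ) (2*π), ENNReal.ofReal 202 :=
          lintegral_mono fun t => hb t
      _ = ENNReal.ofReal 202 * volume (Set.Ioc (0:ℝ) (2*π)) := setLIntegral_const _ _
      _ = ENNReal.ofReal (404*π) := by
          rw [Real.volume_Ioc, ← ENNReal.ofReal_mul (by norm_num)]
          norm_num
          ring_nf
      _ ≤ ENNReal.ofReal (404*π) + ENNReal.ofReal (1000*π^2) := le_self_add
  -- Case 1 < r
  · have ha0 : 0 < 2 - r := by linarith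
    set a := 2 - r with hadef
    set c := 8 / π^2 with hcdef
    have hc0 : 0 < c := by positivity
    have hφ1 : -π < φ := Complex.neg_pi_lt_arg w
    have hφ2 : φ ≤ π := Complex.arg_le_pi w
    -- pointwise bound on the interval
    have hpt : ∀ t ∈ Set.Ioc (0:ℝ) (2*π),
        ENNReal.ofReal
          (Complex.abs (4 - Complex.exp (t*Complex.I) - 3*z₁ - z₁*Complex.exp (t*Complex.I)
              + z₁^2) ^ 2 /
            Complex.abs (2 - z₁*Complex.exp (t*Complex.I)
              - z₁^2*Complex.exp (t*Complex.I)) ^ 2)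
          ≤ ENNReal.ofReal 2 + (ENNReal.ofReal (200*a/(a^2 + c*(t+φ)^2))
              + ENNReal.ofReal (200*a/(a^2 + c*(t+φ-2*π)^2))) := by
      intro t ht
      have hu1 : -π < t + φ := by have := ht.1; linarith
      have hu2 : t + φ ≤ 3*π := by have := ht.2; linarith
      have hL4a : 50 * L ≤ 200 * a := by nlinarith
      have hcos : 4*r*(1 - Real.cos (t + φ)) ≥ 4*(1 - Real.cos (t + φ)) := by
        nlinarith [Real.cos_le_one (t + φ)]
      have hmain : 50 * (L / (a^2 + 4*r*(1 - Real.cos (t + φ))))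
          ≤ 200*a/(a^2 + c*(t+φ)^2) + 200*a/(a^2 + c*(t+φ-2*π)^2) := by
        rcases le_or_gt (t + φ) π with hc1 | hc1
        · have hcb : Real.cos (t + φ) ≤ 1 - 2/π^2 * (t+φ)^2 :=
            Real.cos_le_one_sub_mul_cos_sq (abs_le.2 ⟨by linarith, hc1⟩)
          have hden : a^2 + c*(t+φ)^2 ≤ a^2 + 4*r*(1 - Real.cos (t + φ)) := by
            have hππ : (8:ℝ)/π^2 * (t+φ)^2 = 4*(2/π^2*(t+φ)^2) := by ring
            rw [hcdef]; linarith
          have h1' : 50 * (L / (a^2 + 4*r*(1 - Real.cos (t + φ))))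
              ≤ 200*a/(a^2 + c*(t+φ)^2) := by
            rw [mul_div_assoc'] 
            exact div_le_div₀ (by positivity) hL4a (by positivity) hden
          have h2' : (0:ℝ) ≤ 200*a/(a^2 + c*(t+φ-2*π)^2) := by positivity
          linarith
        · have habs' : |t + φ - 2*π| ≤ π := abs_le.2 ⟨by linarith, by linarith⟩
          have hcb : Real.cos (t + φ - 2*π) ≤ 1 - 2/π^2 * (t+φ-2*π)^2 :=
            Real.cos_le_one_sub_mul_cos_sq habs'
          have hcc : Real.cos (t + φ) = Real.cos (t + φ - 2*π) :=
            (Real.cos_sub_two_pi (t + φ)).symm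
          have hden : a^2 + c*(t+φ-2*π)^2 ≤ a^2 + 4*r*(1 - Real.cos (t + φ)) := by
            have hππ : (8:ℝ)/π^2 * (t+φ-2*π)^2 = 4*(2/π^2*(t+φ-2*π)^2) := by ring
            have hcos' : 4*r*(1 - Real.cos (t+φ-2*π)) ≥ 4*(1 - Real.cos (t+φ-2*π)) := by
              nlinarith [Real.cos_le_one (t+φ-2*π)]
            rw [hcdef, hcc]; linarith
          have h1' : 50 * (L / (a^2 + 4*r*(1 - Real.cos (t + φ))))
              ≤ 200*a/(a^2 + c*(t+φ-2*π)^2) := by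
            rw [mul_div_assoc']
            exact div_le_div₀ (by positivity) hL4a (by positivity) hden
          have h2' : (0:ℝ) ≤ 200*a/(a^2 + c*(t+φ)^2) := by positivity
          linarith
      calc ENNReal.ofReal
            (Complex.abs (4 - Complex.exp (t*Complex.I) - 3*z₁ - z₁*Complex.exp (t*Complex.I)
                + z₁^2) ^ 2 /
              Complex.abs (2 - z₁*Complex.exp (t*Complex.I)
                - z₁^2*Complex.exp (t*Complex.I)) ^ 2)
          ≤ ENNReal.ofReal (2 + (200*a/(a^2 + c*(t+φ)^2) + 200*a/(a^2 + c*(t+φ-2*π)^2))) := by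
            apply ENNReal.ofReal_le_ofReal
            have := hdb t
            linarith
        _ ≤ ENNReal.ofReal 2 + (ENNReal.ofReal (200*a/(a^2 + c*(t+φ)^2))
              + ENNReal.ofReal (200*a/(a^2 + c*(t+φ-2*π)^2))) := by
            refine le_trans (ENNReal.ofReal_add_le) ?_
            exact add_le_add_right ENNReal.ofReal_add_le _
    -- measurability of the bound pieces
    have hg1m : Measurable fun t : ℝ => ENNReal.ofReal (200*a/(a^2 + c*(t+φ)^2)) := by
      apply ENNReal.measurable_ofReal.comp
      fun_prop
    have hg2m : Measurable fun t : ℝ => ENNReal.ofReal (200*a/(a^2 + c*(t+φ-2*π)^2)) := by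
      apply ENNReal.measurable_ofReal.comp
      fun_prop
    -- translation computations
    have htr1 : (∫⁻ t : ℝ, ENNReal.ofReal (200*a/(a^2 + c*(t+φ)^2)))
        ≤ ENNReal.ofReal (200 * π / Real.sqrt c) := by
      have := lintegral_add_right_eq_self (μ := volume)
        (fun v : ℝ => ENNReal.ofReal (200*a/(a^2 + c*v^2))) φ
      calc (∫⁻ t : ℝ, ENNReal.ofReal (200*a/(a^2 + c*(t+φ)^2)))
          = ∫⁻ v : ℝ, ENNReal.ofReal (200*a/(a^2 + c*v^2)) := this
        _ ≤ ENNReal.ofReal (200 * π / Real.sqrt c) := lintegral_cauchy a c ha0 hc0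
    have htr2 : (∫⁻ t : ℝ, ENNReal.ofReal (200*a/(a^2 + c*(t+φ-2*π)^2)))
        ≤ ENNReal.ofReal (200 * π / Real.sqrt c) := by
      have heq : ∀ t : ℝ, t + φ - 2*π = t + (φ - 2*π) := fun t => by ring
      simp_rw [heq]
      have := lintegral_add_right_eq_self (μ := volume)
        (fun v : ℝ => ENNReal.ofReal (200*a/(a^2 + c*v^2))) (φ - 2*π)
      calc (∫⁻ t : ℝ, ENNReal.ofReal (200*a/(a^2 + c*(t+(φ-2*π))^2)))
          = ∫⁻ v : ℝ, ENNReal.ofReal (200*a/(a^2 + c*v^2)) := this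
        _ ≤ ENNReal.ofReal (200 * π / Real.sqrt c) := lintegral_cauchy a c ha0 hc0
    -- the value bound
    have hval : ENNReal.ofReal (200 * π / Real.sqrt c) ≤ ENNReal.ofReal (100 * π^2) := by
      apply ENNReal.ofReal_le_ofReal
      have hsq : 2/π ≤ Real.sqrt c := by
        apply Real.le_sqrt_of_sq_le
        rw [hcdef, div_pow]
        rw [div_le_div_iff₀ (by positivity) (by positivity)]
        nlinarith [Real.pi_pos]
      calc 200 * π / Real.sqrt c ≤ 200 * π / (2/π) := by
            apply div_le_div_of_nonneg_left (by positivity) (by positivity) hsq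
        _ = 100 * π^2 := by field_simp; ring
    -- put everything together
    calc (∫⁻ t in Set.Ioc (0:ℝ) (2*π), ENNReal.ofReal
          (Complex.abs (4 - Complex.exp (t*Complex.I) - 3*z₁ - z₁*Complex.exp (t*Complex.I)
              + z₁^2) ^ 2 /
            Complex.abs (2 - z₁*Complex.exp (t*Complex.I)
              - z₁^2*Complex.exp (t*Complex.I)) ^ 2))
        ≤ ∫⁻ t in Set.Ioc (0:ℝ) (2*π), (ENNReal.ofReal 2
            + (ENNReal.ofReal (200*a/(a^2 + c*(t+φ)^2))
              + ENNReal.ofReal (200*a/(a^2 + c*(t+φ-2*π)^2)))) :=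
          setLIntegral_mono (by exact (measurable_const.add (hg1m.add hg2m))) hpt
      _ = (∫⁻ _t in Set.Ioc (0:ℝ) (2*π), (ENNReal.ofReal 2 : ENNReal))
            + ∫⁻ t in Set.Ioc (0:ℝ) (2*π), (ENNReal.ofReal (200*a/(a^2 + c*(t+φ)^2))
              + ENNReal.ofReal (200*a/(a^2 + c*(t+φ-2*π)^2))) :=
          lintegral_add_left measurable_const _
      _ ≤ ENNReal.ofReal 2 * volume (Set.Ioc (0:ℝ) (2*π))
            + ((∫⁻ t : ℝ, ENNReal.ofReal (200*a/(a^2 + c*(t+φ)^2)))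
              + ∫⁻ t : ℝ, ENNReal.ofReal (200*a/(a^2 + c*(t+φ-2*π)^2))) := by
          gcongr
          · exact le_of_eq (setLIntegral_const _ _)
          · rw [lintegral_add_left hg1m]
            exact add_le_add (setLIntegral_le_lintegral _ _) (setLIntegral_le_lintegral _ _)
      _ ≤ ENNReal.ofReal (404*π) + ENNReal.ofReal (1000*π^2) := by
          have hvol : ENNReal.ofReal 2 * volume (Set.Ioc (0:ℝ) (2*π))
              ≤ ENNReal.ofReal (404*π) := by
            rw [Real.volume_Ioc, ← ENNReal.ofReal_mul (by norm_num)]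
            apply ENNReal.ofReal_le_ofReal
            nlinarith [Real.pi_pos]
          have hsum : ((∫⁻ t : ℝ, ENNReal.ofReal (200*a/(a^2 + c*(t+φ)^2)))
              + ∫⁻ t : ℝ, ENNReal.ofReal (200*a/(a^2 + c*(t+φ-2*π)^2)))
              ≤ ENNReal.ofReal (1000*π^2) := by
            calc _ ≤ ENNReal.ofReal (100*π^2) + ENNReal.ofReal (100*π^2) :=
                  add_le_add (htr1.trans hval) (htr2.trans hval)
              _ = ENNReal.ofReal (200*π^2) := by
                  rw [← ENNReal.ofReal_add (by positivity) (by positivity)]; ring_nf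
              _ ≤ ENNReal.ofReal (1000*π^2) := by
                  apply ENNReal.ofReal_le_ofReal; nlinarith [Real.pi_pos]
          exact add_le_add hvol hsum

open Real in
set_option maxHeartbeats 1000000 in
theorem p1_over_p2_in_L2 :
    (∫⁻ ζ, ENNReal.ofReal
        (‖(4 - ζ.2 - 3 * ζ.1 - ζ.1 * ζ.2 + ζ.1 ^ 2 : ℂ)‖ ^ 2 /
          ‖(2 - ζ.1 * ζ.2 - ζ.1 ^ 2 * ζ.2 : ℂ)‖ ^ 2) ∂haarTorus2) < ⊤ ∧
    MemLp (fun ζ : ℂ × ℂ =>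
        (4 - ζ.2 - 3 * ζ.1 - ζ.1 * ζ.2 + ζ.1 ^ 2) /
          (2 - ζ.1 * ζ.2 - ζ.1 ^ 2 * ζ.2)) 2 haarTorus2 := by
  have hG : Measurable (fun ζ : ℂ × ℂ => ENNReal.ofReal
      (Complex.abs (4 - ζ.2 - 3 * ζ.1 - ζ.1 * ζ.2 + ζ.1 ^ 2) ^ 2 /
        Complex.abs (2 - ζ.1 * ζ.2 - ζ.1 ^ 2 * ζ.2) ^ 2)) := by
    apply Measurable.ennreal_ofReal
    apply Measurable.div
    · exact (((continuous_norm (E := ℂ)).comp (by fun_prop)).pow 2).measurable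
    · exact (((continuous_norm (E := ℂ)).comp (by fun_prop)).pow 2).measurable
  have hΦ : Measurable (fun t : ℝ × ℝ =>
      (Complex.exp (t.1 * Complex.I), Complex.exp (t.2 * Complex.I))) := by fun_prop
  have hmain : (∫⁻ ζ, ENNReal.ofReal
      (Complex.abs (4 - ζ.2 - 3 * ζ.1 - ζ.1 * ζ.2 + ζ.1 ^ 2) ^ 2 /
        Complex.abs (2 - ζ.1 * ζ.2 - ζ.1 ^ 2 * ζ.2) ^ 2) ∂haarTorus2) < ⊤ := by
    have hstep : (∫⁻ ζ, ENNReal.ofReal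
        (Complex.abs (4 - ζ.2 - 3 * ζ.1 - ζ.1 * ζ.2 + ζ.1 ^ 2) ^ 2 /
          Complex.abs (2 - ζ.1 * ζ.2 - ζ.1 ^ 2 * ζ.2) ^ 2) ∂haarTorus2)
        = (ENNReal.ofReal (2 * π))⁻¹ ^ 2 *
          ∫⁻ s in Set.Ioc (0:ℝ) (2*π), ∫⁻ t in Set.Ioc (0:ℝ) (2*π),
          ENNReal.ofReal
          (Complex.abs (4 - Complex.exp (t*Complex.I) - 3*Complex.exp (s*Complex.I)
              - Complex.exp (s*Complex.I)*Complex.exp (t*Complex.I)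
              + Complex.exp (s*Complex.I)^2) ^ 2 /
            Complex.abs (2 - Complex.exp (s*Complex.I)*Complex.exp (t*Complex.I)
              - Complex.exp (s*Complex.I)^2*Complex.exp (t*Complex.I)) ^ 2) := by
      rw [haarTorus2, lintegral_smul_measure, lintegral_map hG hΦ,
        Measure.volume_eq_prod, ← Measure.prod_restrict]
      congr 1
      exact lintegral_prod _ (hG.comp hΦ).aemeasurable
    rw [hstep]
    have hae : ∀ᵐ (s : ℝ) ∂((volume : Measure ℝ).restrict (Set.Ioc (0:ℝ) (2*π))),
        (∫⁻ t in Set.Ioc (0:ℝ) (2*π), ENNReal.ofReal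
          (Complex.abs (4 - Complex.exp (t*Complex.I) - 3*Complex.exp (s*Complex.I)
              - Complex.exp (s*Complex.I)*Complex.exp (t*Complex.I)
              + Complex.exp (s*Complex.I)^2) ^ 2 /
            Complex.abs (2 - Complex.exp (s*Complex.I)*Complex.exp (t*Complex.I)
              - Complex.exp (s*Complex.I)^2*Complex.exp (t*Complex.I)) ^ 2))
          ≤ ENNReal.ofReal (404*π) + ENNReal.ofReal (1000*π^2) := by
      have h0 : ((volume : Measure ℝ).restrict (Set.Ioc (0:ℝ) (2*π))) ({2*π} : Set ℝ) = 0 := by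
        refine le_antisymm (le_trans (Measure.restrict_le_self _) ?_) zero_le
        simp
      filter_upwards [compl_mem_ae_iff.2 h0,
        ae_restrict_mem measurableSet_Ioc] with s hs hsI
      have hsne : s ≠ 2*π := by simpa using hs
      have h1 : Complex.abs (Complex.exp (s*Complex.I)) = 1 :=
        Complex.norm_exp_ofReal_mul_I s
      have hne : Complex.exp (s*Complex.I) ≠ 1 := by
        intro h
        rw [Complex.exp_eq_one_iff] at h
        obtain ⟨n, hn⟩ := h
        have hn' : (s:ℂ) = (n:ℂ) * (2*(π:ℂ)) := by
          apply mul_right_cancel₀ Complex.I_ne_zero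
          rw [hn]; ring
        have hs' : s = (n:ℝ) * (2*π) := by exact_mod_cast hn'
        have hs1 : 0 < s := hsI.1
        have hs2 : s < 2*π := lt_of_le_of_ne hsI.2 hsne
        have hnpos : (0:ℝ) < (n:ℝ) := by nlinarith [Real.pi_pos]
        have hn1 : (1:ℤ) ≤ n := by exact_mod_cast hnpos
        have : (1:ℝ) ≤ (n:ℝ) := by exact_mod_cast hn1
        nlinarith [Real.pi_pos]
      exact inner_bound h1 hne
    have hc : ((ENNReal.ofReal (2 * π))⁻¹ ^ 2) < ⊤ :=
      ENNReal.pow_lt_top (ENNReal.inv_lt_top.2 (ENNReal.ofReal_pos.2 (by positivity)))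
    apply ENNReal.mul_lt_top hc
    calc (∫⁻ s in Set.Ioc (0:ℝ) (2*π), ∫⁻ t in Set.Ioc (0:ℝ) (2*π),
          ENNReal.ofReal
          (Complex.abs (4 - Complex.exp (t*Complex.I) - 3*Complex.exp (s*Complex.I)
              - Complex.exp (s*Complex.I)*Complex.exp (t*Complex.I)
              + Complex.exp (s*Complex.I)^2) ^ 2 /
            Complex.abs (2 - Complex.exp (s*Complex.I)*Complex.exp (t*Complex.I)
              - Complex.exp (s*Complex.I)^2*Complex.exp (t*Complex.I)) ^ 2))
        ≤ ∫⁻ _s in Set.Ioc (0:ℝ) (2*π),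
            (ENNReal.ofReal (404*π) + ENNReal.ofReal (1000*π^2)) :=
          lintegral_mono_ae hae
      _ = (ENNReal.ofReal (404*π) + ENNReal.ofReal (1000*π^2))
            * volume (Set.Ioc (0:ℝ) (2*π)) := setLIntegral_const _ _
      _ < ⊤ := by
          apply ENNReal.mul_lt_top
          · exact ENNReal.add_lt_top.2 ⟨ENNReal.ofReal_lt_top, ENNReal.ofReal_lt_top⟩
          · rw [Real.volume_Ioc]; exact ENNReal.ofReal_lt_top
  refine ⟨hmain, ?_, ?_⟩
  · apply Measurable.aestronglyMeasurable
    apply Measurable.div <;> exact (by fun_prop : Continuous _).measurable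
  · rw [eLpNorm_eq_lintegral_rpow_enorm_toReal two_ne_zero ENNReal.ofNat_ne_top]
    apply ENNReal.rpow_lt_top_of_nonneg (by norm_num)
    have heq : ∀ ζ : ℂ × ℂ,
        ((‖(4 - ζ.2 - 3 * ζ.1 - ζ.1 * ζ.2 + ζ.1 ^ 2) /
            (2 - ζ.1 * ζ.2 - ζ.1 ^ 2 * ζ.2)‖ₑ : ENNReal) ^ (2:ENNReal).toReal)
          = ENNReal.ofReal
            (Complex.abs (4 - ζ.2 - 3 * ζ.1 - ζ.1 * ζ.2 + ζ.1 ^ 2) ^ 2 /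
              Complex.abs (2 - ζ.1 * ζ.2 - ζ.1 ^ 2 * ζ.2) ^ 2) := by
      intro ζ
      rw [ENNReal.toReal_ofNat, ← ofReal_norm,
        ENNReal.ofReal_rpow_of_nonneg (norm_nonneg _) (by norm_num : (0:ℝ) ≤ 2)]
      congr 1
      rw [show ((2:ℝ)) = ((2:ℕ):ℝ) by norm_num, Real.rpow_natCast]
      rw [norm_div, div_pow]
      simp [Complex.abs_apply]
    rw [lintegral_congr heq]
    exact hmain.ne
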